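/- Let n ≥ 2 be an integer, 𝔨 > 0 and c ∈ ℝ. Then lim_{R→∞} R ∫_0^{π/(2n)} exp( −𝔨 R^n sin(nφ) + c R sin(φ) ) dφ = 0. -/

import Mathlib

open Real Filter

/-- The arch estimate: for `n ≥ 2`, `𝔨 > 0` and `c ∈ ℝ`,
`R ∫_0^{π/(2n)} exp(-𝔨 Rⁿ sin(nφ) + c R sin φ) dφ → 0` as `R → ∞`. -/
theorem stmt9 (n : ℕ) (hn : 2 ≤ n) (𝔨 : ℝ) (h𝔨 : 0 < 𝔨) (c : ℝ) :
    Tendsto (fun R : ℝ =>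
        R * ∫ φ in (0 : ℝ)..(π / (2 * n)),
          Real.exp (-(𝔨 * R ^ n * Real.sin (n * φ)) + c * R * Real.sin φ))
      atTop (nhds 0) := by
  have hnpos : (0 : ℝ) < n := by positivity
  have hL : (0 : ℝ) < π / (2 * n) := by positivity
  set L : ℝ := π / (2 * n) with hLdef
  set g : ℝ → ℝ := fun R => 2 * 𝔨 * n / π * R ^ (n - 1) - |c| with hg
  have hgt : Tendsto g atTop atTop := by
    apply Tendsto.atTop_add _ tendsto_const_nhds
    apply Tendsto.const_mul_atTop (by positivity)
    exact tendsto_pow_atTop (by omega)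
  have hginv : Tendsto (fun R => (g R)⁻¹) atTop (nhds 0) :=
    tendsto_inv_atTop_zero.comp hgt
  apply squeeze_zero' ?_ ?_ hginv
  · filter_upwards [eventually_ge_atTop (0:ℝ)] with R hR
    have : 0 ≤ ∫ φ in (0:ℝ)..L,
        Real.exp (-(𝔨 * R ^ n * Real.sin (n * φ)) + c * R * Real.sin φ) := by
      apply intervalIntegral.integral_nonneg hL.le
      intro x _; positivity
    positivity
  · filter_upwards [eventually_ge_atTop (1:ℝ), hgt.eventually_ge_atTop 1] with R hR hgR
    have hRpos : (0:ℝ) < R := lt_of_lt_of_le one_pos hR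
    have hgpos : (0:ℝ) < g R := lt_of_lt_of_le one_pos hgR
    set a : ℝ := R * g R with ha
    have hapos : 0 < a := mul_pos hRpos hgpos
    -- pointwise bound on the integrand
    have hbound : ∀ φ ∈ Set.Icc (0:ℝ) L,
        Real.exp (-(𝔨 * R ^ n * Real.sin (n * φ)) + c * R * Real.sin φ)
          ≤ Real.exp (-(a * φ)) := by
      intro φ ⟨h0, h1⟩
      apply Real.exp_le_exp.2
      have hsin1 : 2 / π * (n * φ) ≤ Real.sin (n * φ) := by
        apply Real.mul_le_sin (by positivity)
        calc (n:ℝ) * φ ≤ n * L := by nlinarith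
          _ = π / 2 := by
            rw [hLdef, mul_div_assoc', div_eq_div_iff (by positivity) (by positivity)]; ring
      have hsin2 : Real.sin φ ≤ φ := Real.sin_le h0
      have hsin3 : 0 ≤ Real.sin φ := by
        apply Real.sin_nonneg_of_nonneg_of_le_pi h0
        have hn' : (2:ℝ) ≤ n := by exact_mod_cast hn
        have : L ≤ π := by
          rw [hLdef, div_le_iff₀ (by positivity)]
          nlinarith [Real.pi_pos, mul_le_mul_of_nonneg_left hn' Real.pi_pos.le]
        linarith
      have hc : c * R * Real.sin φ ≤ |c| * R * φ := by
        have h1' : c * Real.sin φ ≤ |c| * Real.sin φ :=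
          mul_le_mul_of_nonneg_right (le_abs_self c) hsin3
        have h2' : |c| * Real.sin φ ≤ |c| * φ :=
          mul_le_mul_of_nonneg_left hsin2 (abs_nonneg c)
        have : c * Real.sin φ ≤ |c| * φ := h1'.trans h2'
        calc c * R * Real.sin φ = R * (c * Real.sin φ) := by ring
          _ ≤ R * (|c| * φ) := mul_le_mul_of_nonneg_left this hRpos.le
          _ = |c| * R * φ := by ring
      have hk : -(𝔨 * R ^ n * Real.sin (n * φ)) ≤ -(𝔨 * R ^ n * (2 / π * (n * φ))) := by
        apply neg_le_neg
        apply mul_le_mul_of_nonneg_left hsin1 (by positivity)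
      have haφ : -(a * φ) = -(𝔨 * R ^ n * (2 / π * (n * φ))) + |c| * R * φ := by
        rw [ha, hg]
        have hRn : R ^ n = R ^ (n - 1) * R := by
          rw [← pow_succ]; congr 1; omega
        field_simp [hRn]
        rw [hRn]; ring
      rw [haφ]
      exact add_le_add hk hc
    -- compute / bound the exponential integral
    have hint : (∫ φ in (0:ℝ)..L, Real.exp (-(a * φ))) = (1 - Real.exp (-(a * L))) / a := by
      have : ∀ φ ∈ Set.uIcc (0:ℝ) L, HasDerivAt (fun x => -Real.exp (-(a * x)) / a)
          (Real.exp (-(a * φ))) φ := by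
        intro φ _
        have h1 : HasDerivAt (fun x : ℝ => -(a * x)) (-a) φ := by
          exact (((hasDerivAt_id' φ).const_mul a).neg).congr_deriv (by ring)
        have h2 := (Real.hasDerivAt_exp (-(a * φ))).comp φ h1
        have h3 := (h2.neg).div_const a
        exact h3.congr_deriv (by rw [mul_neg, neg_neg, mul_div_assoc, div_self hapos.ne', mul_one])
      rw [intervalIntegral.integral_eq_sub_of_hasDerivAt this
        (by apply Continuous.intervalIntegrable; fun_prop)]
      field_simp
      simp only [mul_zero, neg_zero, Real.exp_zero]
      ring
    have hmono : (∫ φ in (0:ℝ)..L,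
        Real.exp (-(𝔨 * R ^ n * Real.sin (n * φ)) + c * R * Real.sin φ))
        ≤ ∫ φ in (0:ℝ)..L, Real.exp (-(a * φ)) := by
      apply intervalIntegral.integral_mono_on hL.le
      · apply Continuous.intervalIntegrable; fun_prop
      · apply Continuous.intervalIntegrable; fun_prop
      · exact hbound
    have hle1 : (∫ φ in (0:ℝ)..L, Real.exp (-(a * φ))) ≤ 1 / a := by
      rw [hint]
      have h := Real.exp_pos (-(a * L))
      gcongr
      linarith
    calc R * ∫ φ in (0:ℝ)..L,
          Real.exp (-(𝔨 * R ^ n * Real.sin (n * φ)) + c * R * Real.sin φ)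
        ≤ R * (1 / a) := by
          apply mul_le_mul_of_nonneg_left (hmono.trans hle1) hRpos.le
      _ = (g R)⁻¹ := by
          rw [ha]; field_simp
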